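/- Let R' be a K'-graded ring, ψ: K' → K a group epimorphism, and χ: ker(ψ) → R'^{+,*} a group homomorphism with χ(w') ∈ R'_{w'} for all w' ∈ ker(ψ). Then the quotient map R' → R'/⟨1 - χ(w') : w' ∈ ker(ψ)⟩ is a component-wise isomorphic epimorphism with respect to the induced K-grading on the quotient. -/

import Mathlib

open DirectSum

noncomputable def piAux {K' K R' : Type*} [AddCommGroup K'] [DecidableEq K'] [AddCommGroup K]
    [DecidableEq K] [CommRing R'] (𝒜' : K' → AddSubgroup R') [GradedRing 𝒜'] (ψ : K' →+ K)
    (χ : K' → R') (w' : K') : R' →+ R' :=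
  (DirectSum.toAddMonoid fun v' =>
      if ψ v' = ψ w' then (AddMonoidHom.mulLeft (χ (w' - v'))).comp (𝒜' v').subtype else 0).comp
    (DirectSum.decomposeAddEquiv 𝒜').toAddMonoidHom

theorem piAux_of_mem {K' K R' : Type*} [AddCommGroup K'] [DecidableEq K'] [AddCommGroup K]
    [DecidableEq K] [CommRing R'] (𝒜' : K' → AddSubgroup R') [GradedRing 𝒜'] (ψ : K' →+ K)
    (χ : K' → R') (w' v' : K') {x : R'} (hx : x ∈ 𝒜' v') :
    piAux 𝒜' ψ χ w' x = if ψ v' = ψ w' then χ (w' - v') * x else 0 := by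
  unfold piAux
  simp only [AddMonoidHom.comp_apply, AddEquiv.coe_toAddMonoidHom,
    DirectSum.decomposeAddEquiv_apply, DirectSum.decompose_of_mem 𝒜' hx,
    DirectSum.toAddMonoid_of]
  split_ifs with h
  · rfl
  · rfl

theorem piAux_mul_chi {K' K R' : Type*} [AddCommGroup K'] [DecidableEq K'] [AddCommGroup K]
    [DecidableEq K] [CommRing R'] (𝒜' : K' → AddSubgroup R') [GradedRing 𝒜'] (ψ : K' →+ K)
    (χ : K' → R')
    (hχ : ∀ w' : K', ψ w' = 0 → χ w' ∈ 𝒜' w' ∧ IsUnit (χ w'))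
    (hχadd : ∀ w v : K', ψ w = 0 → ψ v = 0 → χ (w + v) = χ w * χ v)
    (w' u : K') (hu : ψ u = 0) (r : R') :
    piAux 𝒜' ψ χ w' (r * χ u) = piAux 𝒜' ψ χ w' r := by
  induction r using DirectSum.Decomposition.inductionOn 𝒜' with
  | zero => simp
  | @homogeneous v' x =>
    obtain ⟨x, hx⟩ := x
    have hxu : x * χ u ∈ 𝒜' (v' + u) := SetLike.mul_mem_graded hx (hχ u hu).1
    rw [piAux_of_mem 𝒜' ψ χ w' _ hxu, piAux_of_mem 𝒜' ψ χ w' _ hx]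
    have hcond : ψ (v' + u) = ψ w' ↔ ψ v' = ψ w' := by
      rw [map_add, hu, add_zero]
    split_ifs with h1 h2
    · have hk1 : ψ (w' - v' - u) = 0 := by
        have := hcond.mp h1
        simp [map_sub, this, hu]
      have : χ (w' - v' - u + u) = χ (w' - v' - u) * χ u := hχadd _ _ hk1 hu
      have he : w' - v' - u + u = w' - v' := by abel
      rw [he] at this
      have he2 : w' - (v' + u) = w' - v' - u := by abel
      rw [he2, this]
      ring
    all_goals simp_all [hcond]
  | add x y hx hy => rw [add_mul, map_add, hx, hy, map_add]

theorem piAux_eq_zero_of_mem {K' K R' : Type*} [AddCommGroup K'] [DecidableEq K'] [AddCommGroup K]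
    [DecidableEq K] [CommRing R'] (𝒜' : K' → AddSubgroup R') [GradedRing 𝒜'] (ψ : K' →+ K)
    (χ : K' → R')
    (hχ : ∀ w' : K', ψ w' = 0 → χ w' ∈ 𝒜' w' ∧ IsUnit (χ w'))
    (hχadd : ∀ w v : K', ψ w = 0 → ψ v = 0 → χ (w + v) = χ w * χ v)
    (w' : K') {x : R'}
    (hx : x ∈ Ideal.span {x : R' | ∃ u : K', ψ u = 0 ∧ x = 1 - χ u}) :
    piAux 𝒜' ψ χ w' x = 0 := by
  have key : ∀ y ∈ Ideal.span {x : R' | ∃ u : K', ψ u = 0 ∧ x = 1 - χ u},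
      ∀ r : R', piAux 𝒜' ψ χ w' (r * y) = 0 := by
    intro y hy
    induction hy using Submodule.span_induction with
    | mem s hs =>
      obtain ⟨u, hu, rfl⟩ := hs
      intro r
      rw [mul_sub, mul_one, map_sub, piAux_mul_chi 𝒜' ψ χ hχ hχadd w' u hu, sub_self]
    | zero => intro r; simp
    | add a b _ _ ha hb => intro r; rw [mul_add, map_add, ha, hb, add_zero]
    | smul c a _ ha => intro r; rw [smul_eq_mul, ← mul_assoc, ha]
  have := key x hx 1
  rwa [one_mul] at this

/-- Let `R'` be a `K'`-graded ring, `ψ : K' → K` a group epimorphism and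
`χ : ker ψ → R'^{+,*}` a homomorphism with `χ(w') ∈ R'_{w'}`. Then the quotient map
`R' → R'/⟨1 - χ(w') : w' ∈ ker ψ⟩` is a component-wise isomorphic epimorphism with respect
to the induced `K`-grading (degree `w` component = image of the `R'_{w'}` with `ψ(w') = w`). -/
theorem stmt_9 {K' K R' : Type*} [AddCommGroup K'] [DecidableEq K'] [AddCommGroup K]
    [DecidableEq K] [CommRing R']
    (𝒜' : K' → AddSubgroup R') [GradedRing 𝒜'] (ψ : K' →+ K) (hψ : Function.Surjective ψ)
    (χ : K' → R')
    (hχ : ∀ w' : K', ψ w' = 0 → χ w' ∈ 𝒜' w' ∧ IsUnit (χ w'))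
    (hχadd : ∀ w v : K', ψ w = 0 → ψ v = 0 → χ (w + v) = χ w * χ v)
    (hχzero : χ 0 = 1) :
    letI I : Ideal R' := Ideal.span {x : R' | ∃ w' : K', ψ w' = 0 ∧ x = 1 - χ w'}
    letI ℬ : K → AddSubgroup (R' ⧸ I) := fun w =>
      AddSubgroup.closure ((Ideal.Quotient.mk I) '' (⋃ w' ∈ {w' : K' | ψ w' = w}, (𝒜' w' : Set R')))
    Function.Surjective (Ideal.Quotient.mk I) ∧
      ∀ w' : K', Set.BijOn (Ideal.Quotient.mk I) (𝒜' w' : Set R') (ℬ (ψ w') : Set (R' ⧸ I)) := by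
  set I : Ideal R' := Ideal.span {x : R' | ∃ w' : K', ψ w' = 0 ∧ x = 1 - χ w'} with hI
  -- mk (χ u) = 1 for u in the kernel
  have hmkχ : ∀ u : K', ψ u = 0 → Ideal.Quotient.mk I (χ u) = 1 := by
    intro u hu
    have : (1 : R') - χ u ∈ I := Ideal.subset_span ⟨u, hu, rfl⟩
    have h := (Ideal.Quotient.eq (I := I)).mpr this
    simpa using h.symm
  -- piAux fixes degree-w' elements
  have hfix : ∀ (w' : K') (x : R'), x ∈ 𝒜' w' → piAux 𝒜' ψ χ w' x = x := by
    intro w' x hx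
    rw [piAux_of_mem 𝒜' ψ χ w' w' hx, if_pos rfl, sub_self, hχzero, one_mul]
  refine ⟨Ideal.Quotient.mk_surjective, fun w' => ⟨?_, ?_, ?_⟩⟩
  · -- MapsTo
    intro x hx
    exact AddSubgroup.subset_closure ⟨x, Set.mem_biUnion rfl hx, rfl⟩
  · -- InjOn
    intro x hx y hy hxy
    have hmem : x - y ∈ I := (Ideal.Quotient.eq (I := I)).mp hxy
    have h0 : piAux 𝒜' ψ χ w' (x - y) = 0 :=
      piAux_eq_zero_of_mem 𝒜' ψ χ hχ hχadd w' hmem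
    rw [map_sub, hfix w' x hx, hfix w' y hy, sub_eq_zero] at h0
    exact h0
  · -- SurjOn
    intro q hq
    have hsub : (AddSubgroup.closure ((Ideal.Quotient.mk I) ''
        (⋃ v' ∈ {v' : K' | ψ v' = ψ w'}, (𝒜' v' : Set R'))) : Set (R' ⧸ I)) ⊆
        ((𝒜' w').map (Ideal.Quotient.mk I).toAddMonoidHom : Set (R' ⧸ I)) := by
      apply AddSubgroup.closure_le _ |>.mpr
      rintro _ ⟨y, hy, rfl⟩
      obtain ⟨v', hv', hyv⟩ := Set.mem_iUnion₂.mp hy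
      have hker : ψ (w' - v') = 0 := by
        simp only [Set.mem_setOf_eq] at hv'
        simp [map_sub, hv']
      have hmem : χ (w' - v') * y ∈ 𝒜' w' := by
        have := SetLike.mul_mem_graded (hχ _ hker).1 hyv
        rwa [sub_add_cancel] at this
      refine ⟨χ (w' - v') * y, hmem, ?_⟩
      rw [RingHom.toAddMonoidHom_eq_coe, AddMonoidHom.coe_coe, map_mul, hmkχ _ hker, one_mul]
    obtain ⟨x, hx, hxq⟩ := hsub hq
    exact ⟨x, hx, hxq⟩
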